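/- Let s and t be non-negative integers, and let G1, G2, G3 be graphs. If G2 is an s-perturbation of G1 and G3 is a t-perturbation of G2, then G3 is an (s+t)-perturbation of G1. -/

import Mathlib

namespace EP

variable {V W : Type}

/-- Local complementation of `G` at `v`: complement the adjacency between
every pair of distinct neighbours of `v`. -/
def localComp (G : SimpleGraph V) (v : V) : SimpleGraph V where
  Adj x y := x ≠ y ∧
    ((G.Adj v x ∧ G.Adj v y ∧ ¬ G.Adj x y) ∨ (¬(G.Adj v x ∧ G.Adj v y) ∧ G.Adj x y))
  symm := ⟨by
    intro x y h
    obtain ⟨hxy, h⟩ := h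
    refine ⟨hxy.symm, ?_⟩
    rcases h with ⟨h1, h2, h3⟩ | ⟨h1, h2⟩
    · exact Or.inl ⟨h2, h1, fun h => h3 h.symm⟩
    · exact Or.inr ⟨fun h => h1 ⟨h.2, h.1⟩, h2.symm⟩⟩
  loopless := ⟨fun x h => h.1 rfl⟩

/-- Two graphs on the same vertex set are locally equivalent if one is obtained from
the other by a sequence of local complementations. -/
def LocEquiv (G G' : SimpleGraph V) : Prop :=
  Relation.ReflTransGen (fun A B => ∃ v, B = localComp A v) G G'

/-- `H` is a vertex-minor of `G`, located at the embedding `f`: some graph locally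
equivalent to `G` induces a copy of `H` on the image of `f` (equivalently, `H` is
obtained from `G` by a sequence of local complementations and vertex deletions,
with `f` recording the surviving vertices). -/
def IsVertexMinorAt (G : SimpleGraph V) (H : SimpleGraph W) (f : W ↪ V) : Prop :=
  ∃ G' : SimpleGraph V, LocEquiv G G' ∧ ∀ x y, H.Adj x y ↔ G'.Adj (f x) (f y)

/-- `G` has a vertex-minor isomorphic to `H`. -/
def HasVertexMinor (G : SimpleGraph V) (H : SimpleGraph W) : Prop :=
  ∃ f : W ↪ V, IsVertexMinorAt G H f

/-- `G₁` is a `t`-perturbation of `G₂`: they have the same vertex set `V`, and some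
graph on `|V| + t` vertices contains both of them as vertex-minors (on `V`). -/
def IsPerturbation (t : ℕ) (G₁ G₂ : SimpleGraph V) : Prop :=
  ∃ Gbig : SimpleGraph (V ⊕ Fin t),
    IsVertexMinorAt Gbig G₁ ⟨Sum.inl, Sum.inl_injective⟩ ∧
    IsVertexMinorAt Gbig G₂ ⟨Sum.inl, Sum.inl_injective⟩

/-- The disjoint union of `k` copies of `H`. -/
def copies (k : ℕ) (H : SimpleGraph W) : SimpleGraph (Fin k × W) where
  Adj x y := x.1 = y.1 ∧ H.Adj x.2 y.2
  symm := ⟨fun _ _ h => ⟨h.1.symm, h.2.symm⟩⟩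
  loopless := ⟨fun x h => H.loopless.irrefl x.2 h.2⟩

/-- `G` is a circle graph: its vertices can be assigned chords of a circle
(encoded by pairs of distinct endpoints, all `2|V|` endpoints being distinct) so that
two distinct vertices are adjacent iff their chords cross, i.e. exactly one endpoint
of one chord lies strictly between the two endpoints of the other. -/
def IsCircleGraph (G : SimpleGraph V) : Prop :=
  ∃ a b : V → ℝ,
    (∀ u v, a u = a v → u = v) ∧ (∀ u v, b u = b v → u = v) ∧ (∀ u v, a u ≠ b v) ∧
    ∀ u v, G.Adj u v ↔ u ≠ v ∧
      ¬((min (a u) (b u) < a v ∧ a v < max (a u) (b u)) ↔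
        (min (a u) (b u) < b v ∧ b v < max (a u) (b u)))

/-- `G` is `t`-robust for `H` if every `t`-perturbation of `G` has a vertex-minor
isomorphic to `H`. -/
def Robust (t : ℕ) (G : SimpleGraph V) (H : SimpleGraph W) : Prop :=
  ∀ G' : SimpleGraph V, IsPerturbation t G' G → HasVertexMinor G' H

open Classical in
/-- The cut-rank of `X` in `G`: the rank over `GF(2)` of the `X × Xᶜ` submatrix of the
adjacency matrix of `G`. -/
noncomputable def cutRank [Fintype V] (G : SimpleGraph V) (X : Set V) : ℕ :=
  (Matrix.of fun (x : X) (y : ↥Xᶜ) => if G.Adj x.1 y.1 then (1 : ZMod 2) else 0).rank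

/-- The graph obtained from `G` by deleting all edges with exactly one end in `X`. -/
def cutDelete (G : SimpleGraph V) (X : Set V) : SimpleGraph V where
  Adj x y := G.Adj x y ∧ (x ∈ X ↔ y ∈ X)
  symm := ⟨fun _ _ h => ⟨h.1.symm, h.2.symm⟩⟩
  loopless := ⟨fun x h => G.loopless.irrefl x h.1⟩

lemma localComp_adj (G : SimpleGraph V) (v x y : V) :
    (localComp G v).Adj x y ↔ x ≠ y ∧
      ((G.Adj v x ∧ G.Adj v y ∧ ¬ G.Adj x y) ∨ (¬(G.Adj v x ∧ G.Adj v y) ∧ G.Adj x y)) :=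
  Iff.rfl

lemma localComp_adj_left (G : SimpleGraph V) (v x : V) :
    (localComp G v).Adj v x ↔ G.Adj v x := by
  rw [localComp_adj]
  constructor
  · rintro ⟨hne, ⟨hv, _, _⟩ | ⟨_, h⟩⟩
    · exact absurd hv (G.irrefl)
    · exact h
  · intro h
    exact ⟨G.ne_of_adj h, Or.inr ⟨fun hc => G.irrefl hc.1, h⟩⟩

lemma localComp_localComp (G : SimpleGraph V) (v : V) :
    localComp (localComp G v) v = G := by
  ext x y
  rw [localComp_adj, localComp_adj_left, localComp_adj_left, localComp_adj]
  constructor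
  · rintro ⟨hne, h⟩
    by_cases hp : G.Adj v x <;> by_cases hq : G.Adj v y <;> tauto
  · intro h
    have hne := G.ne_of_adj h
    by_cases hp : G.Adj v x <;> by_cases hq : G.Adj v y <;> tauto

lemma locEquiv_symm {G G' : SimpleGraph V} (h : LocEquiv G G') : LocEquiv G' G := by
  induction h with
  | refl => exact Relation.ReflTransGen.refl
  | tail _ h2 ih =>
    obtain ⟨v, rfl⟩ := h2
    exact Relation.ReflTransGen.head ⟨v, (localComp_localComp _ v).symm⟩ ih

lemma comap_localComp {S : Type} {ι : S → V} (hι : Function.Injective ι)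
    (C : SimpleGraph V) (v : S) :
    (localComp C (ι v)).comap ι = localComp (C.comap ι) v := by
  ext x y
  simp only [SimpleGraph.comap_adj, localComp_adj, hι.ne_iff]

lemma locEquiv_lift {S : Type} {ι : S → V} (hι : Function.Injective ι)
    {C : SimpleGraph V} {H H' : SimpleGraph S} (hc : C.comap ι = H)
    (he : LocEquiv H H') : ∃ C', LocEquiv C C' ∧ C'.comap ι = H' := by
  induction he with
  | refl => exact ⟨C, Relation.ReflTransGen.refl, hc⟩
  | tail _ h2 ih =>
    obtain ⟨C'', hC'', hcomap⟩ := ih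
    obtain ⟨v, rfl⟩ := h2
    exact ⟨localComp C'' (ι v), hC''.tail ⟨ι v, rfl⟩,
      by rw [comap_localComp hι, hcomap]⟩

lemma natAdd_injective (s : ℕ) {t : ℕ} :
    Function.Injective (Fin.natAdd s : Fin t → Fin (s + t)) := by
  intro i j h
  have h2 := congrArg Fin.val h
  simp only [Fin.natAdd] at h2
  exact Fin.ext (by omega)

/-- Gluing relation for combining two host graphs over a common `V`. -/
def glueRel (s t : ℕ) (A : SimpleGraph (V ⊕ Fin s)) (B : SimpleGraph (V ⊕ Fin t)) :
    (V ⊕ Fin (s + t)) → (V ⊕ Fin (s + t)) → Prop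
  | .inl x, .inl y => A.Adj (.inl x) (.inl y)
  | .inl x, .inr j =>
      if h : (j : ℕ) < s then A.Adj (.inl x) (.inr ⟨j, h⟩)
      else B.Adj (.inl x) (.inr ⟨(j : ℕ) - s, by have := j.isLt; omega⟩)
  | .inr _, .inl _ => False
  | .inr i, .inr j =>
      if hi : (i : ℕ) < s then
        if hj : (j : ℕ) < s then A.Adj (.inr ⟨i, hi⟩) (.inr ⟨j, hj⟩) else False
      else
        if hj : (j : ℕ) < s then False
        else B.Adj (.inr ⟨(i : ℕ) - s, by have := i.isLt; omega⟩)
               (.inr ⟨(j : ℕ) - s, by have := j.isLt; omega⟩)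

/-- The glued graph. -/
def glue (s t : ℕ) (A : SimpleGraph (V ⊕ Fin s)) (B : SimpleGraph (V ⊕ Fin t)) :
    SimpleGraph (V ⊕ Fin (s + t)) :=
  SimpleGraph.fromRel (glueRel s t A B)

lemma glue_comap_left (s t : ℕ) (A : SimpleGraph (V ⊕ Fin s)) (B : SimpleGraph (V ⊕ Fin t)) :
    (glue s t A B).comap (Sum.map id (Fin.castAdd t)) = A := by
  ext a b
  cases a with
  | inl x =>
    cases b with
    | inl y =>
      simp only [SimpleGraph.comap_adj, glue, SimpleGraph.fromRel_adj, glueRel, Sum.map_inl]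
      constructor
      · rintro ⟨_, h | h⟩
        · exact h
        · exact h.symm
      · intro h
        exact ⟨fun hc => A.ne_of_adj h
          (by injection hc with h'; exact congrArg Sum.inl h'), Or.inl h⟩
    | inr i =>
      simp only [SimpleGraph.comap_adj, glue, SimpleGraph.fromRel_adj, glueRel,
        Sum.map_inl, Sum.map_inr, Fin.coe_castAdd, i.isLt, dif_pos, Fin.eta]
      constructor
      · rintro ⟨_, h | h⟩
        · exact h
        · exact h.elim
      · intro h
        exact ⟨Sum.inl_ne_inr, Or.inl h⟩
  | inr i =>
    cases b with
    | inl y =>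
      simp only [SimpleGraph.comap_adj, glue, SimpleGraph.fromRel_adj, glueRel,
        Sum.map_inl, Sum.map_inr, Fin.coe_castAdd, i.isLt, dif_pos, Fin.eta]
      constructor
      · rintro ⟨_, h | h⟩
        · exact h.elim
        · exact h.symm
      · intro h
        exact ⟨Sum.inr_ne_inl, Or.inr h.symm⟩
    | inr j =>
      simp only [SimpleGraph.comap_adj, glue, SimpleGraph.fromRel_adj, glueRel,
        Sum.map_inr, Fin.coe_castAdd, i.isLt, j.isLt, dif_pos, Fin.eta]
      constructor
      · rintro ⟨_, h | h⟩
        · exact h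
        · exact h.symm
      · intro h
        refine ⟨?_, Or.inl h⟩
        intro hc
        apply A.ne_of_adj h
        injection hc with h'
        have : i = j := Fin.castAdd_injective s t h'
        rw [this]

lemma glue_comap_right (s t : ℕ) (A : SimpleGraph (V ⊕ Fin s)) (B : SimpleGraph (V ⊕ Fin t))
    (hAB : ∀ x y : V, A.Adj (.inl x) (.inl y) ↔ B.Adj (.inl x) (.inl y)) :
    (glue s t A B).comap (Sum.map id (Fin.natAdd s)) = B := by
  have hns : ∀ j : Fin t, ¬ ((Fin.natAdd s j : Fin (s + t)) : ℕ) < s := by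
    intro j
    simp [Fin.natAdd]
  have hsub : ∀ j : Fin t, ((Fin.natAdd s j : Fin (s + t)) : ℕ) - s = (j : ℕ) := by
    intro j
    simp [Fin.natAdd]
  ext a b
  cases a with
  | inl x =>
    cases b with
    | inl y =>
      simp only [SimpleGraph.comap_adj, glue, SimpleGraph.fromRel_adj, glueRel,
        Sum.map_inl, hAB]
      constructor
      · rintro ⟨_, h | h⟩
        · exact h
        · exact h.symm
      · intro h
        exact ⟨fun hc => B.ne_of_adj h
          (by injection hc with h'; exact congrArg Sum.inl h'), Or.inl h⟩
    | inr j =>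
      simp only [SimpleGraph.comap_adj, glue, SimpleGraph.fromRel_adj, glueRel,
        Sum.map_inl, Sum.map_inr, hns j, dif_neg, hsub j, Fin.eta]
      constructor
      · rintro ⟨_, h | h⟩
        · exact h
        · exact h.elim
      · intro h
        exact ⟨Sum.inl_ne_inr, Or.inl h⟩
  | inr i =>
    cases b with
    | inl y =>
      simp only [SimpleGraph.comap_adj, glue, SimpleGraph.fromRel_adj, glueRel,
        Sum.map_inl, Sum.map_inr, hns i, dif_neg, hsub i, Fin.eta]
      constructor
      · rintro ⟨_, h | h⟩
        · exact h.elim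
        · exact h.symm
      · intro h
        exact ⟨Sum.inr_ne_inl, Or.inr h.symm⟩
    | inr j =>
      simp only [SimpleGraph.comap_adj, glue, SimpleGraph.fromRel_adj, glueRel,
        Sum.map_inr, hns i, hns j, dif_neg, hsub i, hsub j, Fin.eta]
      constructor
      · rintro ⟨_, h | h⟩
        · exact h
        · exact h.symm
      · intro h
        refine ⟨?_, Or.inl h⟩
        intro hc
        apply B.ne_of_adj h
        injection hc with h'
        have : i = j := natAdd_injective s h'
        rw [this]

/-- Perturbations compose: if `G₂` is an `s`-perturbation of `G₁` and
`G₃` is a `t`-perturbation of `G₂`, then `G₃` is an `(s+t)`-perturbation of `G₁`. -/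
theorem perturbation_trans {V : Type} [Fintype V] (s t : ℕ) (G₁ G₂ G₃ : SimpleGraph V)
    (h₁ : IsPerturbation s G₂ G₁) (h₂ : IsPerturbation t G₃ G₂) :
    IsPerturbation (s + t) G₃ G₁ := by
  obtain ⟨A, ⟨A₂, hAA₂, hA₂⟩, ⟨A₁, hAA₁, hA₁⟩⟩ := h₁
  obtain ⟨B, ⟨B₃, hBB₃, hB₃⟩, ⟨B₂, hBB₂, hB₂⟩⟩ := h₂
  have hι₁ : Function.Injective (Sum.map (id : V → V) (Fin.castAdd t)) :=
    Function.Injective.sumMap Function.injective_id (Fin.castAdd_injective s t)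
  have hι₂ : Function.Injective
      (Sum.map (id : V → V) (Fin.natAdd s : Fin t → Fin (s + t))) :=
    Function.Injective.sumMap Function.injective_id (natAdd_injective s)
  have hc₁ := glue_comap_left s t A₂ B₂
  have hc₂ := glue_comap_right s t A₂ B₂ (fun x y => ((hA₂ x y).symm.trans (hB₂ x y)))
  obtain ⟨C₁, hC₁, hC₁c⟩ := locEquiv_lift hι₁ hc₁ ((locEquiv_symm hAA₂).trans hAA₁)
  obtain ⟨C₃, hC₃, hC₃c⟩ := locEquiv_lift hι₂ hc₂ ((locEquiv_symm hBB₂).trans hBB₃)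
  refine ⟨glue s t A₂ B₂, ⟨C₃, hC₃, ?_⟩, ⟨C₁, hC₁, ?_⟩⟩
  · intro x y
    refine (hB₃ x y).trans ?_
    exact iff_of_eq (congrArg (fun G => G.Adj (Sum.inl x) (Sum.inl y)) hC₃c).symm
  · intro x y
    refine (hA₁ x y).trans ?_
    exact iff_of_eq (congrArg (fun G => G.Adj (Sum.inl x) (Sum.inl y)) hC₁c).symm

end EP
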